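/- Let Γ be an even Artin graph, Δ an induced subgraph of Γ, A ⊆ V(Δ), and g, t ∈ G_Γ such that G_A ∪ gG_Ag^{-1} ⊆ tG_Δt^{-1}. Then there exists h ∈ G_Δ such that: (i) G_A = hG_Ah^{-1} if and only if G_A = gG_Ag^{-1}; (ii) G_A ∩ hG_Ah^{-1} is a parabolic subgroup of G_Δ if and only if G_A ∩ gG_Ag^{-1} is a parabolic subgroup of G_Γ. -/

import Mathlib

/-- An Artin graph: a simplicial graph with even/arbitrary labels; `m u v = 0`
means `u` and `v` are not joined by an edge, otherwise `m u v ≥ 2` is the label. -/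
structure ArtinGraph (V : Type) where
  m : V → V → ℕ
  symm : ∀ u v, m u v = m v u
  loopless : ∀ v, m v v = 0
  ne_one : ∀ u v, m u v ≠ 1

namespace ArtinGraph

variable {V : Type}

/-- `word u v n` is the prefix of length `n` of the alternating word `uvuv…`. -/
def word : V → V → ℕ → FreeGroup V
  | _, _, 0 => 1
  | u, v, n + 1 => FreeGroup.of u * word v u n

/-- The Artin relations of the graph. -/
def rels (Γ : ArtinGraph V) : Set (FreeGroup V) :=
  {r | ∃ u v, Γ.m u v ≠ 0 ∧ r = word u v (Γ.m u v) * (word v u (Γ.m u v))⁻¹}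

/-- The Artin group of an Artin graph. -/
def ArtinGroup (Γ : ArtinGraph V) : Type := PresentedGroup Γ.rels

instance (Γ : ArtinGraph V) : Group Γ.ArtinGroup :=
  inferInstanceAs (Group (PresentedGroup Γ.rels))

/-- The generator of the Artin group corresponding to a vertex. -/
def gen (Γ : ArtinGraph V) (v : V) : Γ.ArtinGroup := PresentedGroup.of v

/-- The standard parabolic subgroup on a set `S` of vertices. -/
def std (Γ : ArtinGraph V) (S : Set V) : Subgroup Γ.ArtinGroup :=
  Subgroup.closure (Γ.gen '' S)

/-- The conjugate `g H g⁻¹` of a subgroup. -/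
def conjP {G : Type*} [Group G] (g : G) (H : Subgroup G) : Subgroup G :=
  H.map (MulAut.conj g).toMonoidHom

/-- A parabolic subgroup is a conjugate of a standard parabolic subgroup. -/
def IsParabolic (Γ : ArtinGraph V) (P : Subgroup Γ.ArtinGroup) : Prop :=
  ∃ (S : Set V) (g : Γ.ArtinGroup), P = conjP g (Γ.std S)

/-- An Artin graph is even if all labels are even. -/
def IsEven (Γ : ArtinGraph V) : Prop := ∀ u v, Even (Γ.m u v)

/-- The FC condition for even Artin graphs: in every triangle at least two of
the three labels are equal to `2`. -/
def IsFC (Γ : ArtinGraph V) : Prop :=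
  ∀ u v w, Γ.m u v ≠ 0 → Γ.m v w ≠ 0 → Γ.m w u ≠ 0 →
    (Γ.m u v = 2 ∧ Γ.m v w = 2) ∨ (Γ.m v w = 2 ∧ Γ.m w u = 2) ∨
      (Γ.m u v = 2 ∧ Γ.m w u = 2)

/-- The link of a vertex. -/
def lk (Γ : ArtinGraph V) (x : V) : Set V := {u | Γ.m x u ≠ 0}

/-- The star of a vertex. -/
def star (Γ : ArtinGraph V) (x : V) : Set V := insert x (Γ.lk x)

end ArtinGraph

section Aux

open Subgroup ArtinGraph

variable {G : Type*} [Group G]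

lemma mem_conjP {g x : G} {H : Subgroup G} : x ∈ conjP g H ↔ g⁻¹ * x * g ∈ H := by
  constructor
  · rintro ⟨y, hy, rfl⟩
    simpa [MulAut.conj_apply, mul_assoc] using hy
  · intro h
    exact ⟨g⁻¹ * x * g, h, by simp [MulAut.conj_apply]; group⟩

lemma conjP_conjP (a b : G) (H : Subgroup G) : conjP a (conjP b H) = conjP (a*b) H := by
  ext x; simp only [mem_conjP, mul_inv_rev]; group

lemma conjP_one (H : Subgroup G) : conjP (1:G) H = H := by
  ext x; simp [mem_conjP]

lemma conjP_inf (a : G) (H K : Subgroup G) : conjP a (H ⊓ K) = conjP a H ⊓ conjP a K := by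
  ext x; simp [mem_conjP]

lemma conjP_inj {a : G} {H K : Subgroup G} (h : conjP a H = conjP a K) : H = K := by
  have := congrArg (conjP a⁻¹) h
  rwa [conjP_conjP, conjP_conjP, inv_mul_cancel, conjP_one, conjP_one] at this

lemma conjP_closure (a : G) (X : Set G) :
    conjP a (Subgroup.closure X) = Subgroup.closure ((fun x => a * x * a⁻¹) '' X) := by
  unfold conjP
  rw [MonoidHom.map_closure]
  rfl

lemma map_conjP {H : Type*} [Group H] (f : G →* H) (a : G) (K : Subgroup G) :
    (conjP a K).map f = conjP (f a) (K.map f) := by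
  unfold conjP
  rw [Subgroup.map_map, Subgroup.map_map]
  congr 1
  ext x
  simp [MulAut.conj_apply]

end Aux

namespace ArtinGraph

open scoped Classical

variable {V : Type}

lemma lift_word_even {G : Type*} [Group G] (f : V → G) (u v : V) :
    ∀ k, FreeGroup.lift f (word u v (2*k)) = (f u * f v)^k
  | 0 => by simp [word]
  | k+1 => by
    have h2 : 2*(k+1) = (2*k) + 1 + 1 := by ring
    rw [h2]
    show FreeGroup.lift f (word u v ((2*k+1)+1)) = _
    rw [word, word, map_mul, map_mul, FreeGroup.lift_apply_of, FreeGroup.lift_apply_of,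
      lift_word_even f u v k, pow_succ']
    group

lemma lift_word_mk {Γ : ArtinGraph V} (f : V → Γ.ArtinGroup) :
    ∀ (n : ℕ) (u v : V), f u = Γ.gen u → f v = Γ.gen v →
      FreeGroup.lift f (word u v n) = PresentedGroup.mk Γ.rels (word u v n)
  | 0, u, v, _, _ => by simp [word]; rfl
  | n+1, u, v, hu, hv => by
    rw [word, map_mul, map_mul, FreeGroup.lift_apply_of, hu,
      lift_word_mk f n v u hv hu]
    rfl

lemma mk_rel {Γ : ArtinGraph V} {r : FreeGroup V} (hr : r ∈ Γ.rels) :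
    PresentedGroup.mk Γ.rels r = 1 := by
  have : r ∈ Subgroup.normalClosure Γ.rels := Subgroup.subset_normalClosure hr
  exact (QuotientGroup.eq_one_iff r).mpr this

noncomputable def rf (Γ : ArtinGraph V) (W : Set V) : V → Γ.ArtinGroup :=
  fun v => if v ∈ W then Γ.gen v else 1

lemma rf_rels (Γ : ArtinGraph V) (W : Set V) (hEven : Γ.IsEven) :
    ∀ r ∈ Γ.rels, FreeGroup.lift (rf Γ W) r = 1 := by
  rintro r ⟨u, v, hm, rfl⟩
  obtain ⟨k, hk⟩ := hEven u v
  have hk2 : Γ.m u v = 2 * k := by omega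
  by_cases hu : u ∈ W <;> by_cases hv : v ∈ W
  · rw [map_mul, map_inv,
      lift_word_mk (rf Γ W) _ u v (by simp [rf, hu]) (by simp [rf, hv]),
      lift_word_mk (rf Γ W) _ v u (by simp [rf, hv]) (by simp [rf, hu])]
    have := mk_rel (Γ := Γ) ⟨u, v, hm, rfl⟩
    simp only [map_mul, map_inv] at this
    exact this
  · rw [map_mul, map_inv, hk2, lift_word_even, lift_word_even]
    simp [rf, hu, hv]
  · rw [map_mul, map_inv, hk2, lift_word_even, lift_word_even]
    simp [rf, hu, hv]
  · rw [map_mul, map_inv, hk2, lift_word_even, lift_word_even]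
    simp [rf, hu, hv]

noncomputable def rho (Γ : ArtinGraph V) (W : Set V) (hEven : Γ.IsEven) : Γ.ArtinGroup →* Γ.ArtinGroup :=
  PresentedGroup.toGroup (rf_rels Γ W hEven)

lemma rho_gen (Γ : ArtinGraph V) (W : Set V) (hEven : Γ.IsEven) (v : V) :
    rho Γ W hEven (Γ.gen v) = if v ∈ W then Γ.gen v else 1 :=
  PresentedGroup.toGroup.of (rf_rels Γ W hEven)

lemma gen_mem_std {Γ : ArtinGraph V} {W : Set V} {v : V} (h : v ∈ W) :
    Γ.gen v ∈ Γ.std W :=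
  Subgroup.subset_closure ⟨v, h, rfl⟩

lemma std_mono {Γ : ArtinGraph V} {S T : Set V} (h : S ⊆ T) : Γ.std S ≤ Γ.std T :=
  Subgroup.closure_mono (Set.image_mono h)

lemma rho_mem (Γ : ArtinGraph V) (W : Set V) (hEven : Γ.IsEven) (x : Γ.ArtinGroup) :
    rho Γ W hEven x ∈ Γ.std W := by
  refine PresentedGroup.generated_by Γ.rels ((Γ.std W).comap (rho Γ W hEven)) (fun j => ?_) x
  show rho Γ W hEven (Γ.gen j) ∈ Γ.std W
  rw [rho_gen]
  split
  · exact gen_mem_std (by assumption)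
  · exact one_mem _

lemma rho_fix {Γ : ArtinGraph V} {W : Set V} (hEven : Γ.IsEven) {x : Γ.ArtinGroup}
    (hx : x ∈ Γ.std W) : rho Γ W hEven x = x := by
  induction hx using Subgroup.closure_induction with
  | mem y hy =>
    obtain ⟨v, hv, rfl⟩ := hy
    rw [rho_gen, if_pos hv]
  | one => exact map_one _
  | mul a b _ _ ha hb => rw [map_mul, ha, hb]
  | inv a _ ha => rw [map_inv, ha]

lemma rho_map_of_le {Γ : ArtinGraph V} {W : Set V} (hEven : Γ.IsEven)
    {Q : Subgroup Γ.ArtinGroup} (hQ : Q ≤ Γ.std W) : Q.map (rho Γ W hEven) = Q := by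
  ext x
  constructor
  · rintro ⟨y, hy, rfl⟩
    rwa [rho_fix hEven (hQ hy)]
  · intro hx
    exact ⟨x, hx, rho_fix hEven (hQ hx)⟩

lemma rho_map_std {Γ : ArtinGraph V} {W : Set V} (hEven : Γ.IsEven) (S : Set V) :
    (Γ.std S).map (rho Γ W hEven) = Γ.std (S ∩ W) := by
  unfold std
  rw [MonoidHom.map_closure]
  apply le_antisymm
  · rw [Subgroup.closure_le]
    rintro x ⟨y, ⟨s, hs, rfl⟩, rfl⟩
    rw [SetLike.mem_coe, rho_gen]
    split
    · exact Subgroup.subset_closure ⟨s, ⟨hs, by assumption⟩, rfl⟩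
    · exact one_mem _
  · rw [Subgroup.closure_le]
    rintro x ⟨s, ⟨hs1, hs2⟩, rfl⟩
    exact Subgroup.subset_closure ⟨Γ.gen s, ⟨s, hs1, rfl⟩, by rw [rho_gen, if_pos hs2]⟩

end ArtinGraph

open ArtinGraph in
/-- reduction to subgraphs. `Δ` is the induced subgraph on `W ⊆ V`,
whose Artin group sits inside `G_Γ` as `G_W`; a `Δ`-parabolic subgroup is a
conjugate (by an element of `G_W`) of a standard parabolic on a subset of `W`.
If `G_A ∪ gG_Ag⁻¹ ⊆ tG_Wt⁻¹`, then there is `h ∈ G_W` such that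
(i) `G_A = hG_Ah⁻¹ ↔ G_A = gG_Ag⁻¹` and
(ii) `G_A ∩ hG_Ah⁻¹` is `Δ`-parabolic iff `G_A ∩ gG_Ag⁻¹` is `Γ`-parabolic. -/
theorem stmt8 {V : Type} (Γ : ArtinGraph V) (hEven : Γ.IsEven) (W : Set V)
    (A : Set V) (hA : A ⊆ W) (g t : Γ.ArtinGroup)
    (hsub : Γ.std A ≤ conjP t (Γ.std W) ∧ conjP g (Γ.std A) ≤ conjP t (Γ.std W)) :
    ∃ h ∈ Γ.std W,
      ((Γ.std A = conjP h (Γ.std A)) ↔ (Γ.std A = conjP g (Γ.std A))) ∧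
      ((∃ S : Set V, S ⊆ W ∧ ∃ d ∈ Γ.std W,
          Γ.std A ⊓ conjP h (Γ.std A) = conjP d (Γ.std S)) ↔
        Γ.IsParabolic (Γ.std A ⊓ conjP g (Γ.std A))) := by
  obtain ⟨hsub1, hsub2⟩ := hsub
  set ρ := ArtinGraph.rho Γ W hEven with hρdef
  set p := ρ t with hpdef
  set h := ρ g with hhdef
  set z := t * p⁻¹ with hz
  have hgenW : ∀ v ∈ A, Γ.gen v ∈ Γ.std W := fun v hv => gen_mem_std (hA hv)
  have hgenA : ∀ v ∈ A, Γ.gen v ∈ Γ.std A := fun v hv => gen_mem_std hv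
  have F1 : ∀ v ∈ A, z * Γ.gen v * z⁻¹ = Γ.gen v := by
    intro v hv
    have h1 : t⁻¹ * Γ.gen v * t ∈ Γ.std W := mem_conjP.mp (hsub1 (hgenA v hv))
    set w := t⁻¹ * Γ.gen v * t with hw
    have h2 : t * w * t⁻¹ = Γ.gen v := by rw [hw]; group
    have h3 : ρ (t * w * t⁻¹) = Γ.gen v := by rw [h2]; exact rho_fix hEven (hgenW v hv)
    have h4 : p * w * p⁻¹ = Γ.gen v := by
      rw [← h3, map_mul, map_mul, map_inv, rho_fix hEven h1]
    calc z * Γ.gen v * z⁻¹ = t * p⁻¹ * (p * w * p⁻¹) * (t * p⁻¹)⁻¹ := by rw [h4, hz]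
      _ = t * w * t⁻¹ := by group
      _ = Γ.gen v := h2
  have F2 : ∀ v ∈ A, g * Γ.gen v * g⁻¹ = (z*h) * Γ.gen v * (z*h)⁻¹ := by
    intro v hv
    have hmem : g * Γ.gen v * g⁻¹ ∈ conjP g (Γ.std A) := by
      refine mem_conjP.mpr ?_
      rw [show g⁻¹ * (g * Γ.gen v * g⁻¹) * g = Γ.gen v by group]
      exact hgenA v hv
    have h1 : t⁻¹ * (g * Γ.gen v * g⁻¹) * t ∈ Γ.std W := mem_conjP.mp (hsub2 hmem)
    set w := t⁻¹ * (g * Γ.gen v * g⁻¹) * t with hw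
    have h2 : t * w * t⁻¹ = g * Γ.gen v * g⁻¹ := by rw [hw]; group
    have h3 : ρ (t * w * t⁻¹) = h * Γ.gen v * h⁻¹ := by
      rw [h2, map_mul, map_mul, map_inv, rho_fix hEven (hgenW v hv)]
    have h4 : p * w * p⁻¹ = h * Γ.gen v * h⁻¹ := by
      rw [← h3, map_mul, map_mul, map_inv, rho_fix hEven h1]
    calc g * Γ.gen v * g⁻¹ = t * w * t⁻¹ := h2.symm
      _ = (t*p⁻¹) * (p * w * p⁻¹) * (t*p⁻¹)⁻¹ := by group
      _ = (t*p⁻¹) * (h * Γ.gen v * h⁻¹) * (t*p⁻¹)⁻¹ := by rw [h4]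
      _ = (z*h) * Γ.gen v * (z*h)⁻¹ := by rw [hz]; group
  have himg1 : (fun x => z * x * z⁻¹) '' (Γ.gen '' A) = Γ.gen '' A := by
    apply Set.Subset.antisymm
    · rintro _ ⟨_, ⟨v, hv, rfl⟩, rfl⟩
      exact ⟨v, hv, (F1 v hv).symm⟩
    · rintro _ ⟨v, hv, rfl⟩
      exact ⟨Γ.gen v, ⟨v, hv, rfl⟩, F1 v hv⟩
  have F3 : conjP z (Γ.std A) = Γ.std A := by
    unfold ArtinGraph.std
    rw [conjP_closure, himg1]
  have himg2 : (fun x => g*x*g⁻¹) '' (Γ.gen '' A)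
      = (fun x => (z*h)*x*(z*h)⁻¹) '' (Γ.gen '' A) := by
    apply Set.image_congr
    rintro _ ⟨v, hv, rfl⟩
    exact F2 v hv
  have E : conjP g (Γ.std A) = conjP z (conjP h (Γ.std A)) := by
    rw [conjP_conjP]
    unfold ArtinGraph.std
    rw [conjP_closure, conjP_closure, himg2]
  refine ⟨h, rho_mem Γ W hEven g, ?_, ?_⟩
  · constructor
    · intro hi
      rw [E, ← hi, F3]
    · intro hi
      apply conjP_inj (a := z)
      rw [F3, ← E]
      exact hi
  · constructor
    · rintro ⟨S, hSW, d, hd, heq⟩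
      refine ⟨S, z*d, ?_⟩
      calc Γ.std A ⊓ conjP g (Γ.std A)
          = conjP z (Γ.std A) ⊓ conjP z (conjP h (Γ.std A)) := by rw [F3, E]
        _ = conjP z (Γ.std A ⊓ conjP h (Γ.std A)) := (conjP_inf _ _ _).symm
        _ = conjP z (conjP d (Γ.std S)) := by rw [heq]
        _ = conjP (z*d) (Γ.std S) := conjP_conjP _ _ _
    · rintro ⟨S, c, hc⟩
      have hQle : Γ.std A ⊓ conjP h (Γ.std A) ≤ Γ.std W :=
        le_trans inf_le_left (std_mono hA)
      have hQ : Γ.std A ⊓ conjP h (Γ.std A) = conjP (z⁻¹ * c) (Γ.std S) := by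
        apply conjP_inj (a := z)
        rw [conjP_inf, F3, ← E, hc, conjP_conjP]
        congr 1
        group
      refine ⟨S ∩ W, Set.inter_subset_right, ρ (z⁻¹ * c), rho_mem Γ W hEven _, ?_⟩
      calc Γ.std A ⊓ conjP h (Γ.std A)
          = (Γ.std A ⊓ conjP h (Γ.std A)).map ρ := (rho_map_of_le hEven hQle).symm
        _ = (conjP (z⁻¹*c) (Γ.std S)).map ρ := by rw [hQ]
        _ = conjP (ρ (z⁻¹*c)) ((Γ.std S).map ρ) := map_conjP ρ _ _
        _ = conjP (ρ (z⁻¹*c)) (Γ.std (S ∩ W)) := by rw [rho_map_std hEven S]
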